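/- arXiv:1907.03664 — 9 statements merged into one kernel-verified Lean document; each statement's English description precedes it below -/
import Mathlib

section
/- Let ρ and ρ' be positive semidefinite complex matrices indexed by Fin d₁ × Fin d₂. Then puri-rank(ρ + ρ') ≤ puri-rank(ρ) + puri-rank(ρ'). -/
open Matrix Kronecker
open scoped BigOperators ComplexOrder

/-- Reindex arbitrary fintype column indices to `Fin`s, preserving the Gram product. -/
lemma puri_mem {d₁ d₂ : ℕ} (ρ : Matrix (Fin d₁ × Fin d₂) (Fin d₁ × Fin d₂) ℂ)
    (r : ℕ) (n₁ n₂ : Type) [Fintype n₁] [Fintype n₂]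
    (L₁ : Fin r → Matrix (Fin d₁) n₁ ℂ) (L₂ : Fin r → Matrix (Fin d₂) n₂ ℂ)
    (h : (∑ k, L₁ k ⊗ₖ L₂ k) * (∑ k, L₁ k ⊗ₖ L₂ k)ᴴ = ρ) :
    ∃ (d₁' d₂' : ℕ) (M₁ : Fin r → Matrix (Fin d₁) (Fin d₁') ℂ)
      (M₂ : Fin r → Matrix (Fin d₂) (Fin d₂') ℂ),
      (∑ k, M₁ k ⊗ₖ M₂ k) * (∑ k, M₁ k ⊗ₖ M₂ k)ᴴ = ρ := by
  let e₁ := Fintype.equivFin n₁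
  let e₂ := Fintype.equivFin n₂
  refine ⟨Fintype.card n₁, Fintype.card n₂,
    fun k => (L₁ k).submatrix id e₁.symm, fun k => (L₂ k).submatrix id e₂.symm, ?_⟩
  rw [← h]
  ext x y
  simp only [Matrix.mul_apply, Matrix.conjTranspose_apply, Matrix.sum_apply,
    Matrix.kroneckerMap_apply, Matrix.submatrix_apply, id_eq]
  exact Fintype.sum_equiv ((e₁.prodCongr e₂).symm) _ _ (fun c => by simp)

/-- Any matrix with product column index decomposes into Kronecker terms. -/
lemma puri_decomp {d₁ d₂ e₁ e₂ : ℕ} (M : Matrix (Fin d₁ × Fin d₂) (Fin e₁ × Fin e₂) ℂ) :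
    ∃ (L₁ : Fin (d₁ * e₁) → Matrix (Fin d₁) (Fin e₁) ℂ)
      (L₂ : Fin (d₁ * e₁) → Matrix (Fin d₂) (Fin e₂) ℂ),
      ∑ k, L₁ k ⊗ₖ L₂ k = M := by
  refine ⟨fun k => Matrix.single (finProdFinEquiv.symm k).1 (finProdFinEquiv.symm k).2 1,
    fun k => Matrix.of fun b q => M ((finProdFinEquiv.symm k).1, b) ((finProdFinEquiv.symm k).2, q),
    ?_⟩
  ext ⟨a, b⟩ ⟨p, q⟩
  rw [Matrix.sum_apply]
  rw [← Equiv.sum_comp finProdFinEquiv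
    (fun k => (Matrix.single (finProdFinEquiv.symm k).1 (finProdFinEquiv.symm k).2 (1:ℂ) ⊗ₖ
      Matrix.of fun b' q' => M ((finProdFinEquiv.symm k).1, b') ((finProdFinEquiv.symm k).2, q')) (a,b) (p,q))]
  simp only [Equiv.symm_apply_apply, Matrix.kroneckerMap_apply, Matrix.of_apply,
    Matrix.single]
  rw [Fintype.sum_prod_type]
  simp [ite_and, Finset.sum_ite_eq, Finset.sum_ite_eq']

/-- Every psd matrix admits a purification, so the defining set is nonempty. -/
lemma puri_nonempty {d₁ d₂ : ℕ} {ρ : Matrix (Fin d₁ × Fin d₂) (Fin d₁ × Fin d₂) ℂ}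
    (hρ : ρ.PosSemidef) :
    Set.Nonempty {r : ℕ | ∃ (d₁' d₂' : ℕ) (L₁ : Fin r → Matrix (Fin d₁) (Fin d₁') ℂ)
      (L₂ : Fin r → Matrix (Fin d₂) (Fin d₂') ℂ),
      (∑ k, L₁ k ⊗ₖ L₂ k) * (∑ k, L₁ k ⊗ₖ L₂ k)ᴴ = ρ} := by
  open scoped MatrixOrder in obtain ⟨B, hB⟩ := CStarAlgebra.nonneg_iff_eq_star_mul_self.mp hρ.nonneg
  obtain ⟨L₁, L₂, hL⟩ := puri_decomp (Bᴴ)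
  exact ⟨d₁ * d₁, d₁, d₂, L₁, L₂, by rw [hL, Matrix.conjTranspose_conjTranspose, hB, Matrix.star_eq_conjTranspose]⟩

/-- Pad columns on the left block. -/
def padL {m : Type} {a b : ℕ} (A : Matrix m (Fin a) ℂ) : Matrix m (Fin a ⊕ Fin b) ℂ :=
  Matrix.of fun i => Sum.elim (A i) 0

/-- Pad columns on the right block. -/
def padR {m : Type} {a b : ℕ} (A : Matrix m (Fin b) ℂ) : Matrix m (Fin a ⊕ Fin b) ℂ :=
  Matrix.of fun i => Sum.elim 0 (A i)

lemma puri_combine {d₁ d₂ : ℕ} (ρ ρ' : Matrix (Fin d₁ × Fin d₂) (Fin d₁ × Fin d₂) ℂ)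
    {r r' a₁ a₂ b₁ b₂ : ℕ}
    (L₁ : Fin r → Matrix (Fin d₁) (Fin a₁) ℂ) (L₂ : Fin r → Matrix (Fin d₂) (Fin a₂) ℂ)
    (M₁ : Fin r' → Matrix (Fin d₁) (Fin b₁) ℂ) (M₂ : Fin r' → Matrix (Fin d₂) (Fin b₂) ℂ)
    (hL : (∑ k, L₁ k ⊗ₖ L₂ k) * (∑ k, L₁ k ⊗ₖ L₂ k)ᴴ = ρ)
    (hM : (∑ k, M₁ k ⊗ₖ M₂ k) * (∑ k, M₁ k ⊗ₖ M₂ k)ᴴ = ρ') :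
    ∃ (P₁ : Fin (r + r') → Matrix (Fin d₁) (Fin a₁ ⊕ Fin b₁) ℂ)
      (P₂ : Fin (r + r') → Matrix (Fin d₂) (Fin a₂ ⊕ Fin b₂) ℂ),
      (∑ k, P₁ k ⊗ₖ P₂ k) * (∑ k, P₁ k ⊗ₖ P₂ k)ᴴ = ρ + ρ' := by
  refine ⟨Fin.addCases (fun k => padL (L₁ k)) (fun k => padR (M₁ k)),
    Fin.addCases (fun k => padL (L₂ k)) (fun k => padR (M₂ k)), ?_⟩
  have hS : ∑ k : Fin (r + r'),
      (Fin.addCases (fun k => padL (L₁ k)) (fun k => padR (M₁ k)) k : Matrix (Fin d₁) (Fin a₁ ⊕ Fin b₁) ℂ) ⊗ₖ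
      (Fin.addCases (fun k => padL (L₂ k)) (fun k => padR (M₂ k)) k)
      = (∑ k : Fin r, padL (L₁ k) ⊗ₖ padL (L₂ k)) +
        (∑ k : Fin r', padR (M₁ k) ⊗ₖ padR (M₂ k)) := by
    rw [Fin.sum_univ_add]
    simp
  rw [hS, ← hL, ← hM]
  ext x y
  simp only [Matrix.mul_apply, Matrix.conjTranspose_apply, Matrix.add_apply, Matrix.sum_apply,
    Matrix.kroneckerMap_apply, padL, padR, Matrix.of_apply]
  rw [Fintype.sum_prod_type, Fintype.sum_sum_type]
  simp only [Fintype.sum_sum_type, Sum.elim_inl, Sum.elim_inr, Pi.zero_apply, mul_zero, zero_mul,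
    Finset.sum_const_zero, add_zero, zero_add, map_zero, map_sum]
  rw [Fintype.sum_prod_type, Fintype.sum_prod_type]

/-- Purification rank of a bipartite psd matrix: the least number of Kronecker terms of a
matrix `L` with `L * Lᴴ = ρ`. -/
noncomputable def puriRank {d₁ d₂ : ℕ}
    (ρ : Matrix (Fin d₁ × Fin d₂) (Fin d₁ × Fin d₂) ℂ) : ℕ :=
  sInf {r : ℕ | ∃ (d₁' d₂' : ℕ) (L₁ : Fin r → Matrix (Fin d₁) (Fin d₁') ℂ)
    (L₂ : Fin r → Matrix (Fin d₂) (Fin d₂') ℂ),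
    (∑ k, L₁ k ⊗ₖ L₂ k) * (∑ k, L₁ k ⊗ₖ L₂ k)ᴴ = ρ}

theorem puriRank_add_le {d₁ d₂ : ℕ}
    (ρ ρ' : Matrix (Fin d₁ × Fin d₂) (Fin d₁ × Fin d₂) ℂ)
    (hρ : ρ.PosSemidef) (hρ' : ρ'.PosSemidef) :
    puriRank (ρ + ρ') ≤ puriRank ρ + puriRank ρ' := by
  obtain ⟨a₁, a₂, L₁, L₂, hL⟩ := Nat.sInf_mem (puri_nonempty hρ)
  obtain ⟨b₁, b₂, M₁, M₂, hM⟩ := Nat.sInf_mem (puri_nonempty hρ')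
  obtain ⟨P₁, P₂, hP⟩ := puri_combine ρ ρ' L₁ L₂ M₁ M₂ hL hM
  exact Nat.sInf_le (puri_mem (ρ + ρ') _ _ _ P₁ P₂ hP)
end

section
/- Let ρ : Matrix (Fin d × Fin d) (Fin d × Fin d) ℂ be positive semidefinite and swap-invariant, i.e. ρ (i₁,i₂) (j₁,j₂) = ρ (i₂,i₁) (j₂,j₁) for all indices. Then (a) there exist r ∈ ℕ and matrices A k : Matrix (Fin d) (Fin d) ℂ (k < r) with ρ = Σ_{k<r} A k ⊗ₖ A k; and (b) there exist r, d' ∈ ℕ and matrices C k : Matrix (Fin d) (Fin d') ℂ (k < r) such that, setting L = Σ_{k<r} C k ⊗ₖ C k, one has L * Lᴴ = ρ. -/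
open Matrix Kronecker
open scoped BigOperators ComplexOrder
open scoped MatrixOrder

/-- Any swap-invariant complex bipartite matrix admits a symmetric decomposition. -/
private lemma symDecomp {d : ℕ} (L : Matrix (Fin d × Fin d) (Fin d × Fin d) ℂ)
    (hswap : ∀ i₁ i₂ j₁ j₂ : Fin d, L (i₁, i₂) (j₁, j₂) = L (i₂, i₁) (j₂, j₁)) :
    ∃ (r : ℕ) (A : Fin r → Matrix (Fin d) (Fin d) ℂ), L = ∑ k, A k ⊗ₖ A k := by
  classical
  set c : (Fin d × Fin d) → (Fin d × Fin d) → ℂ := fun p q => L (p.1, q.1) (p.2, q.2) / 2 with hc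
  set V : (Fin d × Fin d) → Matrix (Fin d) (Fin d) ℂ :=
    fun p => Matrix.of (fun i j => if p = (i, j) then (1 : ℂ) else 0) with hV
  have hs : ∀ p q, ∃ s : ℂ, s ^ 2 = c p q := fun p q =>
    IsAlgClosed.exists_pow_nat_eq (c p q) two_pos
  have ht : ∀ p q, ∃ s : ℂ, s ^ 2 = -(c p q) := fun p q =>
    IsAlgClosed.exists_pow_nat_eq (-(c p q)) two_pos
  choose s hs2 using hs
  choose t ht2 using ht
  set B : (((Fin d × Fin d) × (Fin d × Fin d)) × Fin 3) → Matrix (Fin d) (Fin d) ℂ :=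
    fun x =>
      Fin.cases (s x.1.1 x.1.2 • (V x.1.1 + V x.1.2))
        (fun i => Fin.cases (t x.1.1 x.1.2 • V x.1.1) (fun _ => t x.1.1 x.1.2 • V x.1.2) i)
        x.2 with hB
  have key : ∀ p q : Fin d × Fin d,
      ∑ u : Fin 3, B ((p, q), u) ⊗ₖ B ((p, q), u)
        = c p q • (V p ⊗ₖ V q) + c p q • (V q ⊗ₖ V p) := by
    intro p q
    have e0 : ∀ (z : ℂ) (X : Matrix (Fin d) (Fin d) ℂ),
        (z • X) ⊗ₖ (z • X) = (z ^ 2) • (X ⊗ₖ X) := by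
      intro z X
      rw [smul_kronecker, kronecker_smul, smul_smul, ← pow_two]
    rw [Fin.sum_univ_three]
    show (s p q • (V p + V q)) ⊗ₖ (s p q • (V p + V q)) + (t p q • V p) ⊗ₖ (t p q • V p)
        + (t p q • V q) ⊗ₖ (t p q • V q) = _
    rw [e0, e0, e0, hs2, ht2, add_kronecker, kronecker_add, kronecker_add]
    rw [neg_smul, smul_add, smul_add, smul_add]
    module
  have main : L = ∑ x : ((Fin d × Fin d) × (Fin d × Fin d)) × Fin 3, B x ⊗ₖ B x := by
    rw [Fintype.sum_prod_type]
    have : ∀ pq : (Fin d × Fin d) × (Fin d × Fin d),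
        ∑ u : Fin 3, B (pq, u) ⊗ₖ B (pq, u)
          = c pq.1 pq.2 • (V pq.1 ⊗ₖ V pq.2) + c pq.1 pq.2 • (V pq.2 ⊗ₖ V pq.1) :=
      fun pq => key pq.1 pq.2
    rw [Finset.sum_congr rfl (fun pq _ => this pq)]
    ext ⟨i₁, i₂⟩ ⟨j₁, j₂⟩
    rw [Matrix.sum_apply]
    simp only [Matrix.add_apply, Matrix.smul_apply, kroneckerMap_apply, hV, Matrix.of_apply,
      smul_eq_mul, mul_ite, mul_one, mul_zero, ite_mul, zero_mul]
    rw [Fintype.sum_prod_type]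
    simp only [Finset.sum_add_distrib]
    simp only [Finset.sum_ite_irrel, Finset.sum_const_zero, Finset.sum_ite_eq',
      Finset.mem_univ, if_true]
    rw [hc]
    simp only
    rw [hswap i₂ i₁ j₂ j₁]
    ring
  refine ⟨Fintype.card (((Fin d × Fin d) × (Fin d × Fin d)) × Fin 3),
    fun k => B ((Fintype.equivFin _).symm k), ?_⟩
  rw [main]
  exact (Equiv.sum_comp (Fintype.equivFin _).symm (fun x => B x ⊗ₖ B x)).symm

/-- Every positive semidefinite swap-invariant bipartite matrix admits a symmetric
operator Schmidt decomposition and a symmetric local purification. -/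
theorem symmetric_decomposition_and_purification_of_swap_invariant {d : ℕ}
    (ρ : Matrix (Fin d × Fin d) (Fin d × Fin d) ℂ) (hρ : ρ.PosSemidef)
    (hswap : ∀ i₁ i₂ j₁ j₂ : Fin d, ρ (i₁, i₂) (j₁, j₂) = ρ (i₂, i₁) (j₂, j₁)) :
    (∃ (r : ℕ) (A : Fin r → Matrix (Fin d) (Fin d) ℂ), ρ = ∑ k, A k ⊗ₖ A k) ∧
    (∃ (r d' : ℕ) (C : Fin r → Matrix (Fin d) (Fin d') ℂ),
      (∑ k, C k ⊗ₖ C k) * (∑ k, C k ⊗ₖ C k)ᴴ = ρ) := by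
  constructor
  · exact symDecomp ρ hswap
  · -- use the psd square root of ρ
    set Q := CFC.sqrt ρ with hQ
    have hQpsd : Q.PosSemidef := Matrix.nonneg_iff_posSemidef.mp (CFC.sqrt_nonneg ρ)
    -- swap invariance of Q
    have e : (Fin d × Fin d) ≃ (Fin d × Fin d) := Equiv.prodComm _ _
    have hQswap : ∀ i₁ i₂ j₁ j₂ : Fin d, Q (i₁, i₂) (j₁, j₂) = Q (i₂, i₁) (j₂, j₁) := by
      have hsub : (Q.submatrix (Equiv.prodComm (Fin d) (Fin d))
          (Equiv.prodComm (Fin d) (Fin d))) = Q := by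
        have hpsd : (Q.submatrix (Equiv.prodComm (Fin d) (Fin d))
            (Equiv.prodComm (Fin d) (Fin d))).PosSemidef :=
          hQpsd.submatrix _
        have hsq : (Q.submatrix (Equiv.prodComm (Fin d) (Fin d))
            (Equiv.prodComm (Fin d) (Fin d))) ^ 2 = ρ := by
          rw [pow_two, Matrix.submatrix_mul_equiv, ← pow_two, hQ, CFC.sq_sqrt ρ hρ.nonneg]
          ext ⟨i₁, i₂⟩ ⟨j₁, j₂⟩
          simp only [Matrix.submatrix_apply, Equiv.prodComm_apply, Prod.swap]
          exact (hswap i₁ i₂ j₁ j₂).symm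
        exact (CFC.sqrt_unique ((pow_two _).symm.trans hsq) hpsd.nonneg).symm
      intro i₁ i₂ j₁ j₂
      have := congrFun (congrFun hsub (i₂, i₁)) (j₂, j₁)
      simpa using this
    obtain ⟨r, C, hC⟩ := symDecomp Q hQswap
    refine ⟨r, d, C, ?_⟩
    rw [← hC, hQpsd.isHermitian.eq, hQ, CFC.sqrt_mul_sqrt_self ρ hρ.nonneg]
end

section
/- Let M : Matrix (Fin d₁) (Fin d₂) ℝ have all entries nonnegative, and let σ(M) : Matrix (Fin d₁ × Fin d₂) (Fin d₁ × Fin d₂) ℂ be the diagonal matrix with σ(M) (i,j) (i,j) = M i j and all other entries 0. Then the least r ∈ ℕ such that there exist A k : Matrix (Fin d₁) (Fin d₁) ℂ and B k : Matrix (Fin d₂) (Fin d₂) ℂ (k < r) with σ(M) = Σ_{k<r} A k ⊗ₖ B k equals the rank of M (Matrix.rank over ℝ). -/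
open Matrix Kronecker
open scoped BigOperators

/-- The diagonal psd matrix associated to a nonnegative matrix `M`. -/
noncomputable def sigmaM {d₁ d₂ : ℕ} (M : Matrix (Fin d₁) (Fin d₂) ℝ) :
    Matrix (Fin d₁ × Fin d₂) (Fin d₁ × Fin d₂) ℂ :=
  Matrix.diagonal (fun p : Fin d₁ × Fin d₂ => (M p.1 p.2 : ℂ))

section Aux

open Submodule Module

/-- A linearly independent family of real vectors stays linearly independent over `ℂ`. -/
lemma osr_aux_li_map {ι : Type*} [Fintype ι] {n : ℕ} (v : ι → Fin n → ℝ)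
    (h : LinearIndependent ℝ v) :
    LinearIndependent ℂ (fun i => fun j => ((v i j : ℝ) : ℂ)) := by
  rw [Fintype.linearIndependent_iff] at h ⊢
  intro g hg i
  have key : ∀ j, (∑ i, g i * (v i j : ℂ)) = 0 := by
    intro j; have := congrFun hg j; simpa using this
  have hre : ∀ i, (g i).re = 0 := h (fun i => (g i).re) (by
    funext j
    have := congrArg Complex.re (key j)
    simpa [Complex.mul_re] using this)
  have him : ∀ i, (g i).im = 0 := h (fun i => (g i).im) (by
    funext j
    have := congrArg Complex.im (key j)
    simpa [Complex.mul_im] using this)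
  exact Complex.ext (hre i) (him i)

/-- The real rank is at most the complex rank of the entrywise cast. -/
lemma osr_aux_rank_le_rank_map {d₁ d₂ : ℕ} (M : Matrix (Fin d₁) (Fin d₂) ℝ) :
    M.rank ≤ (M.map (fun x => (x : ℂ))).rank := by
  classical
  obtain ⟨s, hsub, hspan, hli⟩ := exists_linearIndependent ℝ (Set.range M)
  have hfin : s.Finite := (Set.finite_range M).subset hsub
  haveI : Fintype s := hfin.fintype
  have h1 : M.rank = Fintype.card s := by
    rw [Matrix.rank_eq_finrank_span_row]
    change finrank ℝ (span ℝ (Set.range M)) = _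
    rw [← hspan,
      finrank_span_set_eq_card hli, Set.toFinset_card]
  set v : s → (Fin d₂ → ℂ) := fun x => fun j => ((x : Fin d₂ → ℝ) j : ℂ) with hv
  have hvli : LinearIndependent ℂ v := osr_aux_li_map _ hli
  have hle : span ℂ (Set.range v) ≤ span ℂ (Set.range (M.map (fun x => (x : ℂ)))) := by
    rw [span_le]
    rintro _ ⟨x, rfl⟩
    obtain ⟨i, hi⟩ := hsub x.2
    refine subset_span ⟨i, ?_⟩
    funext j
    simp [hv, Matrix.map_apply, hi]
  rw [h1, (M.map _).rank_eq_finrank_span_row]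
  calc Fintype.card s = finrank ℂ (span ℂ (Set.range v)) := (finrank_span_eq_card hvli).symm
    _ ≤ _ := Submodule.finrank_mono hle

/-- Upper bound: a rank factorization of `M` gives a decomposition of `σ(M)`
into `M.rank` Kronecker products of diagonal matrices. -/
lemma osr_aux_exists {d₁ d₂ : ℕ} (M : Matrix (Fin d₁) (Fin d₂) ℝ) :
    ∃ (A : Fin M.rank → Matrix (Fin d₁) (Fin d₁) ℂ)
      (B : Fin M.rank → Matrix (Fin d₂) (Fin d₂) ℂ),
      sigmaM M = ∑ k, A k ⊗ₖ B k := by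
  classical
  set V : Submodule ℝ (Fin d₂ → ℝ) := span ℝ (Set.range M) with hV
  have hr : finrank ℝ V = M.rank := (Matrix.rank_eq_finrank_span_row M).symm
  let b : Basis (Fin M.rank) ℝ V := (Module.finBasis ℝ V).reindex (finCongr hr)
  have hmem : ∀ i, M i ∈ V := fun i => subset_span ⟨i, rfl⟩
  let c : Fin d₁ → Fin M.rank → ℝ := fun i k => b.repr ⟨M i, hmem i⟩ k
  have key : ∀ i j, M i j = ∑ k, c i k * (b k : Fin d₂ → ℝ) j := by
    intro i j
    have h1 := b.sum_repr ⟨M i, hmem i⟩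
    have h2 := congrArg (Subtype.val) h1
    have h3 := congrFun h2 j
    simp only [Submodule.coe_sum, Submodule.coe_smul, Finset.sum_apply, Pi.smul_apply,
      smul_eq_mul] at h3
    exact h3.symm
  refine ⟨fun k => Matrix.diagonal (fun i => (c i k : ℂ)),
    fun k => Matrix.diagonal (fun j => ((b k : Fin d₂ → ℝ) j : ℂ)), ?_⟩
  ext ⟨i, j⟩ ⟨i', j'⟩
  simp only [sigmaM, Matrix.sum_apply, Matrix.kroneckerMap_apply, Matrix.diagonal_apply,
    Prod.mk.injEq]
  by_cases hi : i = i'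
  · by_cases hj : j = j'
    · subst hi; subst hj
      simp [key i j, Complex.ofReal_sum]
    · simp [hi, hj]
  · simp [hi]

/-- Lower bound: any decomposition of `σ(M)` into `r` Kronecker products yields
`M.rank ≤ r`. -/
lemma osr_aux_le {d₁ d₂ r : ℕ} (M : Matrix (Fin d₁) (Fin d₂) ℝ)
    (A : Fin r → Matrix (Fin d₁) (Fin d₁) ℂ)
    (B : Fin r → Matrix (Fin d₂) (Fin d₂) ℂ)
    (h : sigmaM M = ∑ k, A k ⊗ₖ B k) : M.rank ≤ r := by
  classical
  let C : Matrix (Fin d₁) (Fin r) ℂ := fun i k => A k i i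
  let D : Matrix (Fin r) (Fin d₂) ℂ := fun k j => B k j j
  have hfac : M.map (fun x => (x : ℂ)) = C * D := by
    ext i j
    have h1 := congrFun (congrFun h (i, j)) (i, j)
    simp only [sigmaM, Matrix.diagonal_apply_eq, Matrix.sum_apply,
      Matrix.kroneckerMap_apply] at h1
    rw [Matrix.map_apply, Matrix.mul_apply]
    simpa [C, D] using h1
  calc M.rank ≤ (M.map (fun x => (x : ℂ))).rank := osr_aux_rank_le_rank_map M
    _ = (C * D).rank := by rw [hfac]
    _ ≤ C.rank := Matrix.rank_mul_le_left C D
    _ ≤ Fintype.card (Fin r) := C.rank_le_card_width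
    _ = r := Fintype.card_fin r

end Aux

/-- The operator Schmidt rank of `σ(M)` equals the rank of `M`. -/
theorem osr_sigmaM_eq_rank {d₁ d₂ : ℕ} (M : Matrix (Fin d₁) (Fin d₂) ℝ)
    (hM : ∀ i j, 0 ≤ M i j) :
    sInf {r : ℕ | ∃ (A : Fin r → Matrix (Fin d₁) (Fin d₁) ℂ)
        (B : Fin r → Matrix (Fin d₂) (Fin d₂) ℂ),
        sigmaM M = ∑ k, A k ⊗ₖ B k} = M.rank := by
  have hmem : M.rank ∈ {r : ℕ | ∃ (A : Fin r → Matrix (Fin d₁) (Fin d₁) ℂ)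
      (B : Fin r → Matrix (Fin d₂) (Fin d₂) ℂ), sigmaM M = ∑ k, A k ⊗ₖ B k} :=
    osr_aux_exists M
  refine le_antisymm (Nat.sInf_le hmem) (le_csInf ⟨_, hmem⟩ ?_)
  rintro r ⟨A, B, h⟩
  exact osr_aux_le M A B h
end

section
/- Let M : Matrix (Fin d₁) (Fin d₂) ℝ have all entries nonnegative, and let σ(M) : Matrix (Fin d₁ × Fin d₂) (Fin d₁ × Fin d₂) ℂ be the diagonal matrix with σ(M) (i,j) (i,j) = M i j and all other entries 0. Then the least r ∈ ℕ such that there exist positive semidefinite A k : Matrix (Fin d₁) (Fin d₁) ℂ and B k : Matrix (Fin d₂) (Fin d₂) ℂ (k < r) with σ(M) = Σ_{k<r} A k ⊗ₖ B k equals the nonnegative rank rank₊(M), i.e. the least r such that M = A * B for some entrywise nonnegative A : Matrix (Fin d₁) (Fin r) ℝ and B : Matrix (Fin r) (Fin d₂) ℝ. -/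
open Matrix Kronecker
open scoped BigOperators ComplexOrder

lemma diag_nonneg_of_posSemidef {n : ℕ} {N : Matrix (Fin n) (Fin n) ℂ}
    (h : N.PosSemidef) (i : Fin n) : 0 ≤ N i i := by
  exact h.diag_nonneg

lemma eq_ofReal_re_of_nonneg {z : ℂ} (h : 0 ≤ z) : z = (z.re : ℂ) :=
  Complex.ext (by simp) (by simp [(Complex.nonneg_iff.mp h).2])

/-- The separable rank of `σ(M)` equals the nonnegative rank of `M`. -/
theorem sepRank_sigmaM_eq_nonnegRank {d₁ d₂ : ℕ} (M : Matrix (Fin d₁) (Fin d₂) ℝ)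
    (hM : ∀ i j, 0 ≤ M i j) :
    sInf {r : ℕ | ∃ (A : Fin r → Matrix (Fin d₁) (Fin d₁) ℂ)
        (B : Fin r → Matrix (Fin d₂) (Fin d₂) ℂ),
        (∀ k, (A k).PosSemidef) ∧ (∀ k, (B k).PosSemidef) ∧
        sigmaM M = ∑ k, A k ⊗ₖ B k} =
    sInf {r : ℕ | ∃ (A : Matrix (Fin d₁) (Fin r) ℝ) (B : Matrix (Fin r) (Fin d₂) ℝ),
        (∀ i k, 0 ≤ A i k) ∧ (∀ k j, 0 ≤ B k j) ∧ M = A * B} := by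
  congr 1
  ext r
  simp only [Set.mem_setOf_eq]
  constructor
  · rintro ⟨A, B, hA, hB, hsum⟩
    refine ⟨fun i k => (A k i i).re, fun k j => (B k j j).re, ?_, ?_, ?_⟩
    · intro i k
      exact (Complex.nonneg_iff.mp (diag_nonneg_of_posSemidef (hA k) i)).1
    · intro k j
      exact (Complex.nonneg_iff.mp (diag_nonneg_of_posSemidef (hB k) j)).1
    · ext i j
      have h := congrFun (congrFun hsum (i, j)) (i, j)
      simp only [sigmaM, diagonal_apply_eq, Matrix.sum_apply, kroneckerMap_apply] at h
      have : (M i j : ℂ) = ∑ k, ((A k i i).re : ℂ) * ((B k j j).re : ℂ) := by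
        rw [h]
        refine Finset.sum_congr rfl fun k _ => ?_
        rw [eq_ofReal_re_of_nonneg (diag_nonneg_of_posSemidef (hA k) i),
            eq_ofReal_re_of_nonneg (diag_nonneg_of_posSemidef (hB k) j)]
        simp
      have := congrArg Complex.re this
      exact (by simpa [Matrix.mul_apply, ← Complex.ofReal_mul, ← Complex.ofReal_sum] using this :
        M i j = ∑ k, (A k i i).re * (B k j j).re)
  · rintro ⟨A, B, hA, hB, hAB⟩
    refine ⟨fun k => Matrix.diagonal (fun i => (A i k : ℂ)),
      fun k => Matrix.diagonal (fun j => (B k j : ℂ)), fun k => ?_, fun k => ?_, ?_⟩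
    · exact Matrix.PosSemidef.diagonal fun i => by
        simpa using Complex.zero_le_real.mpr (hA i k)
    · exact Matrix.PosSemidef.diagonal fun j => by
        simpa using Complex.zero_le_real.mpr (hB k j)
    · simp only [Matrix.diagonal_kronecker_diagonal, sigmaM, hAB]
      ext p q
      by_cases hpq : p = q
      · subst hpq
        simp [Matrix.sum_apply, Matrix.mul_apply]
      · simp [Matrix.sum_apply, Matrix.diagonal_apply_ne _ hpq]
end

section
/- Let M : Matrix (Fin d₁) (Fin d₂) ℝ have all entries nonnegative, and let σ(M) : Matrix (Fin d₁ × Fin d₂) (Fin d₁ × Fin d₂) ℂ be the diagonal matrix with σ(M) (i,j) (i,j) = M i j and all other entries 0. Then the purification rank puri-rank(σ(M)) — the least r such that there exist d₁', d₂' ∈ ℕ and L¹ k : Matrix (Fin d₁) (Fin d₁') ℂ, L² k : Matrix (Fin d₂) (Fin d₂') ℂ (k < r) with L = Σ_{k<r} L¹ k ⊗ₖ L² k satisfying L * Lᴴ = σ(M) — equals the complex positive semidefinite rank psd-rank^ℂ(M), i.e. the least r such that there exist positive semidefinite matrices E i, F j : Matrix (Fin r) (Fin r) ℂ (i : Fin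 d₁, j : Fin d₂) with (M i j : ℂ) = Matrix.trace (E i * (F j)ᵀ) for all i, j. -/
open Matrix Kronecker
open scoped BigOperators ComplexOrder

private lemma sum4aux {r n m : ℕ} (h : Fin n → Fin m → Fin r → Fin r → ℂ) :
    ∑ a, ∑ b, ∑ k, ∑ k', h a b k k' = ∑ k, ∑ k', ∑ a, ∑ b, h a b k k' := by
  rw [show (∑ a, ∑ b, ∑ k, ∑ k', h a b k k') = ∑ a, ∑ k, ∑ b, ∑ k', h a b k k' from
    Finset.sum_congr rfl fun a _ => Finset.sum_comm]
  rw [Finset.sum_comm]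
  refine Finset.sum_congr rfl fun k _ => ?_
  rw [show (∑ a, ∑ b, ∑ k', h a b k k') = ∑ a, ∑ k', ∑ b, h a b k k' from
    Finset.sum_congr rfl fun a _ => Finset.sum_comm]
  rw [Finset.sum_comm]

private lemma keyaux {r n m : ℕ} (f : Fin r → Fin n → ℂ) (g : Fin r → Fin m → ℂ) :
    ∑ a, ∑ b, (∑ k, f k a * g k b) * (starRingEnd ℂ) (∑ k, f k a * g k b)
  = ∑ k, ∑ k', (∑ a, f k a * (starRingEnd ℂ) (f k' a)) *
      (∑ b, g k b * (starRingEnd ℂ) (g k' b)) := by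
  simp only [map_sum, _root_.map_mul, Finset.sum_mul_sum]
  rw [sum4aux]
  exact Finset.sum_congr rfl fun k _ => Finset.sum_congr rfl fun k' _ =>
    Finset.sum_congr rfl fun a _ => Finset.sum_congr rfl fun b _ => by ring

private lemma psd_eq_aux {r : ℕ} {A : Matrix (Fin r) (Fin r) ℂ} (hA : A.PosSemidef) :
    ∃ B : Matrix (Fin r) (Fin r) ℂ, A = Bᴴ * B := by
  open scoped MatrixOrder in
  obtain ⟨B, hB⟩ := CStarAlgebra.nonneg_iff_eq_star_mul_self.mp hA.nonneg
  exact ⟨B, hB⟩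

/-- The purification rank of `σ(M)` equals the complex psd rank of `M`. -/
theorem puriRank_sigmaM_eq_psdRank {d₁ d₂ : ℕ} (M : Matrix (Fin d₁) (Fin d₂) ℝ)
    (hM : ∀ i j, 0 ≤ M i j) :
    sInf {r : ℕ | ∃ (d₁' d₂' : ℕ) (L₁ : Fin r → Matrix (Fin d₁) (Fin d₁') ℂ)
        (L₂ : Fin r → Matrix (Fin d₂) (Fin d₂') ℂ),
        (∑ k, L₁ k ⊗ₖ L₂ k) * (∑ k, L₁ k ⊗ₖ L₂ k)ᴴ = sigmaM M} =
    sInf {r : ℕ | ∃ (E : Fin d₁ → Matrix (Fin r) (Fin r) ℂ)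
        (F : Fin d₂ → Matrix (Fin r) (Fin r) ℂ),
        (∀ i, (E i).PosSemidef) ∧ (∀ j, (F j).PosSemidef) ∧
        ∀ i j, (M i j : ℂ) = Matrix.trace (E i * (F j)ᵀ)} := by
  congr 1
  ext r
  simp only [Set.mem_setOf_eq]
  constructor
  · rintro ⟨d₁', d₂', L₁, L₂, hL⟩
    refine ⟨fun i => Matrix.of fun k k' => ∑ a, L₁ k i a * (starRingEnd ℂ) (L₁ k' i a),
            fun j => Matrix.of fun k k' => ∑ b, L₂ k j b * (starRingEnd ℂ) (L₂ k' j b),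
            fun i => ?_, fun j => ?_, fun i j => ?_⟩
    · have h : (Matrix.of fun k k' => ∑ a, L₁ k i a * (starRingEnd ℂ) (L₁ k' i a))
          = (Matrix.of fun (k : Fin r) (a : Fin d₁') => L₁ k i a) *
            (Matrix.of fun (k : Fin r) (a : Fin d₁') => L₁ k i a)ᴴ := by
        ext k k'
        simp [Matrix.mul_apply, Matrix.conjTranspose_apply, Complex.star_def]
      dsimp only
      rw [h]
      exact Matrix.posSemidef_self_mul_conjTranspose _
    · have h : (Matrix.of fun k k' => ∑ b, L₂ k j b * (starRingEnd ℂ) (L₂ k' j b))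
          = (Matrix.of fun (k : Fin r) (b : Fin d₂') => L₂ k j b) *
            (Matrix.of fun (k : Fin r) (b : Fin d₂') => L₂ k j b)ᴴ := by
        ext k k'
        simp [Matrix.mul_apply, Matrix.conjTranspose_apply, Complex.star_def]
      dsimp only
      rw [h]
      exact Matrix.posSemidef_self_mul_conjTranspose _
    · have h := congrFun (congrFun hL (i, j)) (i, j)
      have hd : sigmaM M (i, j) (i, j) = (M i j : ℂ) := by
        simp [sigmaM]
      rw [hd] at h
      rw [← h]
      have htr : Matrix.trace
            ((Matrix.of fun k k' => ∑ a, L₁ k i a * (starRingEnd ℂ) (L₁ k' i a)) *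
              (Matrix.of fun k k' => ∑ b, L₂ k j b * (starRingEnd ℂ) (L₂ k' j b))ᵀ)
          = ∑ k, ∑ k', (∑ a, L₁ k i a * (starRingEnd ℂ) (L₁ k' i a)) *
              (∑ b, L₂ k j b * (starRingEnd ℂ) (L₂ k' j b)) := by
        simp [Matrix.trace, Matrix.diag, Matrix.mul_apply, Matrix.transpose_apply]
      rw [htr, ← keyaux]
      simp only [Matrix.mul_apply, Matrix.sum_apply, Matrix.conjTranspose_apply,
        Matrix.kroneckerMap_apply, Complex.star_def, Fintype.sum_prod_type]
  · rintro ⟨E, F, hE, hF, hEF⟩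
    choose P hP using fun i => (psd_eq_aux (hE i))
    choose Q hQ using fun j => (psd_eq_aux (hF j))
    refine ⟨d₁ * r, d₂ * r,
      fun k => Matrix.of fun i x => if (finProdFinEquiv.symm x).1 = i
        then P i (finProdFinEquiv.symm x).2 k else 0,
      fun k => Matrix.of fun j y => if (finProdFinEquiv.symm y).1 = j
        then Q j (finProdFinEquiv.symm y).2 k else 0, ?_⟩
    have hsum1 : ∀ (f : Fin (d₁ * r) → ℂ),
        ∑ x, f x = ∑ i' : Fin d₁, ∑ a : Fin r, f (finProdFinEquiv (i', a)) := by
      intro f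
      rw [← Fintype.sum_equiv finProdFinEquiv (fun p => f (finProdFinEquiv p)) f fun p => rfl,
        Fintype.sum_prod_type]
    have hsum2 : ∀ (f : Fin (d₂ * r) → ℂ),
        ∑ y, f y = ∑ j' : Fin d₂, ∑ b : Fin r, f (finProdFinEquiv (j', b)) := by
      intro f
      rw [← Fintype.sum_equiv finProdFinEquiv (fun p => f (finProdFinEquiv p)) f fun p => rfl,
        Fintype.sum_prod_type]
    ext ⟨i, j⟩ ⟨i₂, j₂⟩
    simp only [Matrix.mul_apply, Matrix.sum_apply, Matrix.conjTranspose_apply,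
      Matrix.kroneckerMap_apply, Fintype.sum_prod_type, hsum1, hsum2, Matrix.of_apply,
      Equiv.symm_apply_apply, Complex.star_def, map_sum, _root_.map_mul]
    rcases eq_or_ne i i₂ with hi | hi
    · rcases eq_or_ne j j₂ with hj | hj
      · subst hi; subst hj
        rw [show sigmaM M (i, j) (i, j) = (M i j : ℂ) from by simp [sigmaM]]
        have h1 := hEF i j
        rw [hP i, hQ j] at h1
        have h2 : Matrix.trace ((P i)ᴴ * P i * ((Q j)ᴴ * Q j)ᵀ)
            = ∑ k, ∑ k', (∑ a, star (P i a k) * P i a k') *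
                (∑ b, star (Q j b k) * Q j b k') := by
          simp only [Matrix.trace, Matrix.diag_apply, Matrix.mul_apply,
            Matrix.transpose_apply, Matrix.conjTranspose_apply]
        have h3 : ∑ k, ∑ k', (∑ a, star (P i a k) * P i a k') *
                (∑ b, star (Q j b k) * Q j b k')
            = ∑ k, ∑ k', (∑ a, P i a k * (starRingEnd ℂ) (P i a k')) *
                (∑ b, Q j b k * (starRingEnd ℂ) (Q j b k')) := by
          rw [Finset.sum_comm]
          refine Finset.sum_congr rfl fun k _ => Finset.sum_congr rfl fun k' _ => ?_
          congr 1
          · exact Finset.sum_congr rfl fun a _ => by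
              simp only [Complex.star_def]; ring
          · exact Finset.sum_congr rfl fun b _ => by
              simp only [Complex.star_def]; ring
        have hval : (M i j : ℂ) = ∑ a, ∑ b, (∑ k, P i a k * Q j b k) *
            (starRingEnd ℂ) (∑ k, P i a k * Q j b k) := by
          rw [h1, h2, h3, ← keyaux (fun k a => P i a k) (fun k b => Q j b k)]
        rw [hval]
        rw [Finset.sum_eq_single i (fun i' _ hne => by simp [hne])
          (fun habs => absurd (Finset.mem_univ i) habs)]
        simp only [if_pos rfl]
        refine Finset.sum_congr rfl fun a _ => ?_
        rw [Finset.sum_eq_single j (fun j' _ hne => by simp [hne])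
          (fun habs => absurd (Finset.mem_univ j) habs)]
        simp only [if_pos rfl]
        refine Finset.sum_congr rfl fun b _ => ?_
        simp [map_sum]
      · rw [show sigmaM M (i, j) (i₂, j₂) = 0 from
          Matrix.diagonal_apply_ne _ (by simp [Prod.ext_iff, hj])]
        refine Finset.sum_eq_zero fun i' _ => Finset.sum_eq_zero fun a _ =>
          Finset.sum_eq_zero fun j' _ => Finset.sum_eq_zero fun b _ => ?_
        rcases eq_or_ne j' j with h | h
        · subst h
          simp [hj]
        · simp [h]
    · rw [show sigmaM M (i, j) (i₂, j₂) = 0 from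
        Matrix.diagonal_apply_ne _ (by simp [Prod.ext_iff, hi])]
      refine Finset.sum_eq_zero fun i' _ => Finset.sum_eq_zero fun a _ =>
        Finset.sum_eq_zero fun j' _ => Finset.sum_eq_zero fun b _ => ?_
      rcases eq_or_ne i' i with h | h
      · subst h
        simp [hi]
      · simp [h]
end

section
/- Every symmetric entrywise nonnegative real matrix admits a complex completely positive semidefinite transposed (cpsdt) factorisation: if M : Matrix (Fin d) (Fin d) ℝ satisfies M = Mᵀ and 0 ≤ M i j for all i, j, then there exist r ∈ ℕ and positive semidefinite matrices E i : Matrix (Fin r) (Fin r) ℂ (i : Fin d) such that (M i j : ℂ) = Matrix.trace (E i * (E j)ᵀ) for all i, j. -/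
open Matrix
open scoped BigOperators ComplexOrder

section CpsdtAux

lemma cpsdt_key {n : Type*} [Fintype n] [DecidableEq n] (P P' : n) (x y : ℂ) :
    ∑ p, (x * if p = P then (1:ℂ) else 0) * (y * if p = P' then 1 else 0)
      = if P = P' then x * y else 0 := by
  simp only [mul_ite, mul_one, mul_zero, ite_mul, zero_mul]
  rw [Finset.sum_ite_eq' Finset.univ P' (fun p => if p = P then x * y else 0)]
  simp [eq_comm]

noncomputable def cpsdtC1 {d : ℕ} (M : Matrix (Fin d) (Fin d) ℝ) (i k : Fin d) : ℂ :=
  if k = i then ((Real.sqrt (Real.sqrt (M i i)) : ℝ) : ℂ)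
  else ((Real.sqrt (Real.sqrt (M i k) / 2) : ℝ) : ℂ)

noncomputable def cpsdtC2 {d : ℕ} (M : Matrix (Fin d) (Fin d) ℝ) (i k : Fin d) : ℂ :=
  if k = i then 0 else -Complex.I * ((Real.sqrt (Real.sqrt (M i k) / 2) : ℝ) : ℂ)

noncomputable def cpsdtW {d : ℕ} (M : Matrix (Fin d) (Fin d) ℝ) (i k : Fin d) :
    Fin d × Fin d → ℂ :=
  fun p => cpsdtC1 M i k * (if p = (i,k) then 1 else 0)
    + cpsdtC2 M i k * (if p = (k,i) then 1 else 0)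

lemma cpsdt_dot_eq {d : ℕ} (M : Matrix (Fin d) (Fin d) ℝ) (hsymm : M = Mᵀ)
    (i k j l : Fin d) :
    ∑ p, cpsdtW M i k p * cpsdtW M j l p
      = (if j = i ∧ l = k ∧ k = i then ((Real.sqrt (M i i) : ℝ) : ℂ) else 0)
        + (if j = k ∧ l = i ∧ ¬ k = i then -Complex.I * ((Real.sqrt (M i k) : ℝ) : ℂ)
           else 0) := by
  simp only [cpsdtW, add_mul, mul_add, Finset.sum_add_distrib, cpsdt_key, Prod.mk.injEq]
  by_cases h1 : j = i ∧ l = k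
  · obtain ⟨hj, hl⟩ := h1
    by_cases hk : k = i
    · simp only [hj, hl, hk, and_self, if_true, not_true, and_false, if_false, add_zero,
        cpsdtC1, cpsdtC2, mul_zero, zero_mul]
      rw [← Complex.ofReal_mul, Real.mul_self_sqrt (Real.sqrt_nonneg _)]
    · have hk' : ¬ i = k := fun h => hk h.symm
      simp only [hj, hl, hk, hk', and_true, and_false, false_and, and_self, if_true, if_false,
        eq_self_iff_true, true_and, not_false_iff, cpsdtC1, cpsdtC2, if_neg hk]
      ring_nf
      rw [Complex.I_sq]
      ring
  · by_cases h2 : j = k ∧ l = i ∧ ¬ k = i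
    · obtain ⟨hj, hl, hk⟩ := h2
      have hk' : ¬ i = k := fun h => hk h.symm
      have hMs : M k i = M i k := by nth_rewrite 1 [hsymm]; rw [transpose_apply]
      simp only [hj, hl, hk, hk', and_true, and_false, false_and, and_self, if_true, if_false,
        true_and, not_false_iff, cpsdtC1, cpsdtC2, if_neg hk, hMs]
      have hs : ((Real.sqrt (Real.sqrt (M i k) / 2) : ℝ) : ℂ)
            * ((Real.sqrt (Real.sqrt (M i k) / 2) : ℝ) : ℂ)
          = ((Real.sqrt (M i k) : ℝ) : ℂ) / 2 := by
        rw [← Complex.ofReal_mul,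
          Real.mul_self_sqrt (div_nonneg (Real.sqrt_nonneg _) (by norm_num))]
        push_cast; ring
      linear_combination (-2 * Complex.I) * hs
    · have c1 : ¬(i = j ∧ k = l) := fun ⟨a, b⟩ => h1 ⟨a.symm, b.symm⟩
      have c2 : ¬(k = j ∧ i = l) := by
        rintro ⟨a, b⟩
        rcases eq_or_ne k i with hk | hk
        · exact h1 ⟨a.symm.trans hk, b.symm.trans hk.symm⟩
        · exact h2 ⟨a.symm, b.symm, hk⟩
      have c3 : ¬(i = l ∧ k = j) := fun ⟨a, b⟩ => c2 ⟨b, a⟩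
      have c4 : ¬(k = l ∧ i = j) := fun ⟨a, b⟩ => h1 ⟨b.symm, a.symm⟩
      have r1 : ¬(j = i ∧ l = k ∧ k = i) := fun ⟨a, b, _⟩ => h1 ⟨a, b⟩
      simp [c1, c2, c3, c4, r1, h2]

lemma cpsdt_posSemidef_vecMulVec_star {n : Type*} [Fintype n] (a : n → ℂ) :
    (vecMulVec a (star a)).PosSemidef := by
  have h : vecMulVec a (star a) = (Matrix.replicateRow Unit (star a))ᴴ * Matrix.replicateRow Unit (star a) := by
    ext u v
    simp [vecMulVec_apply, Matrix.mul_apply, mul_comm]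
  rw [h]
  exact Matrix.posSemidef_conjTranspose_mul_self _

lemma cpsdt_posSemidef_sum {n ι : Type*} [Fintype n] [Fintype ι] (f : ι → Matrix n n ℂ)
    (h : ∀ i, (f i).PosSemidef) : (∑ i, f i).PosSemidef := by
  refine Finset.sum_induction f _ (fun A B hA hB => ?_) Matrix.PosSemidef.zero
    (fun i _ => h i)
  exact hA.add hB

lemma cpsdt_trace_mul_transpose {n : Type*} [Fintype n] (A B : Matrix n n ℂ) :
    (A * Bᵀ).trace = ∑ u, ∑ v, A u v * B u v := by
  simp [Matrix.trace, Matrix.mul_apply, Matrix.diag]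

lemma cpsdt_trace_vecMulVec {n : Type*} [Fintype n] (a b : n → ℂ) :
    (vecMulVec a (star a) * (vecMulVec b (star b))ᵀ).trace
      = (∑ u, a u * b u) * star (∑ u, a u * b u) := by
  rw [cpsdt_trace_mul_transpose, star_sum, Finset.sum_mul_sum]
  refine Finset.sum_congr rfl fun u _ => Finset.sum_congr rfl fun v _ => ?_
  simp only [vecMulVec_apply, Pi.star_apply, star_mul']
  ring

end CpsdtAux

/-- Every symmetric entrywise nonnegative real matrix admits a complex cpsdt factorisation. -/
theorem exists_cpsdt_factorisation {d : ℕ} (M : Matrix (Fin d) (Fin d) ℝ)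
    (hsymm : M = Mᵀ) (hM : ∀ i j, 0 ≤ M i j) :
    ∃ (r : ℕ) (E : Fin d → Matrix (Fin r) (Fin r) ℂ),
      (∀ i, (E i).PosSemidef) ∧
      ∀ i j, (M i j : ℂ) = Matrix.trace (E i * (E j)ᵀ) := by
  set w : Fin d → Fin d → Fin (d * d) → ℂ :=
    fun i k u => cpsdtW M i k (finProdFinEquiv.symm u) with hw
  refine ⟨d * d, fun i => ∑ k, vecMulVec (w i k) (star (w i k)),
    fun i => cpsdt_posSemidef_sum _ (fun k => cpsdt_posSemidef_vecMulVec_star _),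
    fun i j => ?_⟩
  have expand : (∑ k, vecMulVec (w i k) (star (w i k)))
        * (∑ l, vecMulVec (w j l) (star (w j l)))ᵀ
      = ∑ k, ∑ l, vecMulVec (w i k) (star (w i k)) * (vecMulVec (w j l) (star (w j l)))ᵀ := by
    rw [Matrix.transpose_sum, Matrix.sum_mul]
    exact Finset.sum_congr rfl fun k _ => Matrix.mul_sum _ _ _
  rw [expand]
  simp only [Matrix.trace_sum, cpsdt_trace_vecMulVec]
  have hsum : ∀ k l : Fin d, (∑ u, w i k u * w j l u)
      = (if j = i ∧ l = k ∧ k = i then ((Real.sqrt (M i i) : ℝ) : ℂ) else 0)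
        + (if j = k ∧ l = i ∧ ¬ k = i then -Complex.I * ((Real.sqrt (M i k) : ℝ) : ℂ)
           else 0) := fun k l =>
    (Equiv.sum_comp finProdFinEquiv.symm fun p => cpsdtW M i k p * cpsdtW M j l p).trans
      (cpsdt_dot_eq M hsymm i k j l)
  simp only [hsum]
  rw [Finset.sum_eq_single j ?_ (by simp)]
  · rw [Finset.sum_eq_single i ?_ (by simp)]
    · by_cases hij : j = i
      · have hB : ¬(j = j ∧ i = i ∧ ¬ j = i) := fun h => h.2.2 hij
        simp only [hij, and_self, if_true, not_true, and_false, if_false, add_zero,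
          if_neg hB]
        rw [Complex.star_def, Complex.conj_ofReal, ← Complex.ofReal_mul,
          Real.mul_self_sqrt (hM i i)]
      · have hA : ¬(j = i ∧ i = j ∧ j = i) := fun h => hij h.1
        have hB : (j = j ∧ i = i ∧ ¬ j = i) := ⟨rfl, rfl, hij⟩
        rw [if_neg hA, if_pos hB, zero_add]
        have h2 : ((Real.sqrt (M i j) : ℝ) : ℂ) * ((Real.sqrt (M i j) : ℝ) : ℂ)
            = (M i j : ℂ) := by
          rw [← Complex.ofReal_mul, Real.mul_self_sqrt (hM i j)]
        simp only [star_mul', star_neg, Complex.star_def, Complex.conj_I, Complex.conj_ofReal]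
        linear_combination -h2 + (((Real.sqrt (M i j) : ℝ) : ℂ)
          * ((Real.sqrt (M i j) : ℝ) : ℂ)) * Complex.I_mul_I
    · intro l _ hl
      have hA : ¬(j = i ∧ l = j ∧ j = i) := fun h => hl (h.2.1.trans h.1)
      have hB : ¬(j = j ∧ l = i ∧ ¬ j = i) := fun h => hl h.2.1
      rw [if_neg hA, if_neg hB, add_zero, zero_mul]
  · intro k _ hk
    refine Finset.sum_eq_zero fun l _ => ?_
    have hA : ¬(j = i ∧ l = k ∧ k = i) := by
      rintro ⟨r1, _, r3⟩; exact hk (r3.trans r1.symm)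
    have hB : ¬(j = k ∧ l = i ∧ ¬ k = i) := fun h => hk h.1.symm
    rw [if_neg hA, if_neg hB, add_zero, zero_mul]
end

section
/- There exist d ∈ ℕ and a positive semidefinite, swap-invariant matrix ρ : Matrix (Fin d × Fin d) (Fin d × Fin d) ℂ (i.e. ρ (i₁,i₂) (j₁,j₂) = ρ (i₂,i₁) (j₂,j₁) for all indices) which is separable — there exist r and positive semidefinite A k, B k : Matrix (Fin d) (Fin d) ℂ (k < r) with ρ = Σ_{k<r} A k ⊗ₖ B k — but which admits no symmetric separable decomposition: there is no s ∈ ℕ and no family of positive semidefinite χ k : Matrix (Fin d) (Fin d) ℂ (k < s) with ρ = Σ_{k<s} χ k ⊗ₖ χ k. -/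
open Matrix Kronecker
open scoped BigOperators ComplexOrder

private lemma psd_diag_nonneg {n : Type*} [Fintype n] [DecidableEq n]
    {M : Matrix n n ℂ} (h : M.PosSemidef) (a : n) : 0 ≤ M a a := by
  exact h.diag_nonneg

/-- There is a separable, swap-invariant psd bipartite matrix admitting no symmetric
separable decomposition. -/
theorem exists_separable_swapInvariant_without_symmetric_separable_decomposition :
    ∃ (d : ℕ) (ρ : Matrix (Fin d × Fin d) (Fin d × Fin d) ℂ),
      ρ.PosSemidef ∧
      (∀ i₁ i₂ j₁ j₂ : Fin d, ρ (i₁, i₂) (j₁, j₂) = ρ (i₂, i₁) (j₂, j₁)) ∧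
      (∃ (r : ℕ) (A : Fin r → Matrix (Fin d) (Fin d) ℂ)
        (B : Fin r → Matrix (Fin d) (Fin d) ℂ),
        (∀ k, (A k).PosSemidef) ∧ (∀ k, (B k).PosSemidef) ∧ ρ = ∑ k, A k ⊗ₖ B k) ∧
      ¬∃ (s : ℕ) (χ : Fin s → Matrix (Fin d) (Fin d) ℂ),
        (∀ k, (χ k).PosSemidef) ∧ ρ = ∑ k, χ k ⊗ₖ χ k := by
  refine ⟨2, Matrix.diagonal (fun p => if p.1 = p.2 then 0 else 1), ?_, ?_, ?_, ?_⟩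
  · apply Matrix.PosSemidef.diagonal
    intro p
    dsimp only
    split_ifs <;> norm_num
  · intro i₁ i₂ j₁ j₂
    fin_cases i₁ <;> fin_cases i₂ <;> fin_cases j₁ <;> fin_cases j₂ <;>
      simp [Matrix.diagonal_apply]
  · refine ⟨2, ![Matrix.diagonal ![1,0], Matrix.diagonal ![0,1]],
      ![Matrix.diagonal ![0,1], Matrix.diagonal ![1,0]], ?_, ?_, ?_⟩
    · intro k
      fin_cases k <;>
        · apply Matrix.PosSemidef.diagonal
          intro i; fin_cases i <;> norm_num
    · intro k
      fin_cases k <;>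
        · apply Matrix.PosSemidef.diagonal
          intro i; fin_cases i <;> norm_num
    · ext ⟨i, j⟩ ⟨k, l⟩
      simp only [Fin.sum_univ_two, Matrix.add_apply, Matrix.kroneckerMap_apply,
        Matrix.diagonal_apply, Matrix.sum_apply, Prod.mk.injEq]
      fin_cases i <;> fin_cases j <;> fin_cases k <;> fin_cases l <;> norm_num
  · rintro ⟨s, χ, hpsd, heq⟩
    have h00 := (Matrix.ext_iff.mpr heq) ((0 : Fin 2), (0 : Fin 2)) ((0 : Fin 2), (0 : Fin 2))
    have h01 := (Matrix.ext_iff.mpr heq) ((0 : Fin 2), (1 : Fin 2)) ((0 : Fin 2), (1 : Fin 2))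
    simp only [Matrix.diagonal_apply_eq, Matrix.sum_apply, Matrix.kroneckerMap_apply] at h00 h01
    norm_num at h00 h01
    have hz : ∀ k, χ k 0 0 = 0 := by
      have hnn : ∀ k ∈ Finset.univ, (0:ℂ) ≤ χ k 0 0 * χ k 0 0 := fun k _ =>
        mul_nonneg (psd_diag_nonneg (hpsd k) 0) (psd_diag_nonneg (hpsd k) 0)
      intro k
      have := (Finset.sum_eq_zero_iff_of_nonneg hnn).mp h00.symm k (Finset.mem_univ k)
      exact mul_self_eq_zero.mp this
    rw [Finset.sum_congr rfl (fun k _ => by rw [hz k, zero_mul])] at h01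
    simp at h01
end

section
/- Let ρ : Matrix (Fin d₁ × Fin d₂) (Fin d₁ × Fin d₂) ℂ be positive semidefinite and separable. Then osr(ρ) ≤ sep-rank(ρ) and puri-rank(ρ) ≤ sep-rank(ρ). In particular, if ρ = Σ_{k<s} A k ⊗ₖ B k with every A k and B k positive semidefinite, then there exist d₁', d₂' ∈ ℕ and matrices L¹ k : Matrix (Fin d₁) (Fin d₁') ℂ, L² k : Matrix (Fin d₂) (Fin d₂') ℂ (k < s) such that L = Σ_{k<s} L¹ k ⊗ₖ L² k satisfies L * Lᴴ = ρ. -/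
open Matrix Kronecker
open scoped BigOperators ComplexOrder

/-- Operator Schmidt rank of a bipartite matrix. -/
noncomputable def osr {d₁ d₂ : ℕ} (ρ : Matrix (Fin d₁ × Fin d₂) (Fin d₁ × Fin d₂) ℂ) : ℕ :=
  sInf {r : ℕ | ∃ (A : Fin r → Matrix (Fin d₁) (Fin d₁) ℂ)
      (B : Fin r → Matrix (Fin d₂) (Fin d₂) ℂ),
      ρ = ∑ k, A k ⊗ₖ B k}

/-- A bipartite matrix is separable if it is a finite sum of Kronecker products of psd matrices. -/
def Separable {d₁ d₂ : ℕ} (ρ : Matrix (Fin d₁ × Fin d₂) (Fin d₁ × Fin d₂) ℂ) : Prop :=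
  ∃ (r : ℕ) (A : Fin r → Matrix (Fin d₁) (Fin d₁) ℂ)
    (B : Fin r → Matrix (Fin d₂) (Fin d₂) ℂ),
    (∀ k, (A k).PosSemidef) ∧ (∀ k, (B k).PosSemidef) ∧ ρ = ∑ k, A k ⊗ₖ B k

/-- Separable rank. -/
noncomputable def sepRank {d₁ d₂ : ℕ}
    (ρ : Matrix (Fin d₁ × Fin d₂) (Fin d₁ × Fin d₂) ℂ) : ℕ :=
  sInf {r : ℕ | ∃ (A : Fin r → Matrix (Fin d₁) (Fin d₁) ℂ)
    (B : Fin r → Matrix (Fin d₂) (Fin d₂) ℂ),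
    (∀ k, (A k).PosSemidef) ∧ (∀ k, (B k).PosSemidef) ∧ ρ = ∑ k, A k ⊗ₖ B k}

open Matrix Kronecker
open scoped BigOperators ComplexOrder

section
open scoped MatrixOrder

noncomputable def Matrix.PosSemidef.sqrt {n : Type*} [Fintype n] [DecidableEq n]
    {A : Matrix n n ℂ} (_ : A.PosSemidef) : Matrix n n ℂ := CFC.sqrt A

lemma Matrix.PosSemidef.posSemidef_sqrt {n : Type*} [Fintype n] [DecidableEq n]
    {A : Matrix n n ℂ} (hA : A.PosSemidef) : hA.sqrt.PosSemidef :=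
  (CFC.sqrt_nonneg A).posSemidef

lemma Matrix.PosSemidef.sqrt_mul_self {n : Type*} [Fintype n] [DecidableEq n]
    {A : Matrix n n ℂ} (hA : A.PosSemidef) : hA.sqrt * hA.sqrt = A :=
  CFC.sqrt_mul_sqrt_self A hA.nonneg

end

lemma kron_conjT {l m n p : Type*} [Fintype m] [Fintype p] (A : Matrix l m ℂ) (B : Matrix n p ℂ) :
    (A ⊗ₖ B)ᴴ = Aᴴ ⊗ₖ Bᴴ := by
  ext i j
  simp only [conjTranspose_apply, kroneckerMap_apply]
  rw [StarMul.star_mul, mul_comm]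

lemma sum_mul_sum_conjT {n m : Type*} [Fintype n] [Fintype m] {s : ℕ}
    (M N : Fin s → Matrix n m ℂ) :
    (∑ k, M k) * (∑ k, N k)ᴴ = ∑ k, ∑ l, M k * (N l)ᴴ := by
  rw [conjTranspose_sum, Matrix.sum_mul]
  exact Finset.sum_congr rfl fun k _ => Matrix.mul_sum _ _ _

lemma puri_exists {d₁ d₂ s : ℕ} (A : Fin s → Matrix (Fin d₁) (Fin d₁) ℂ)
    (B : Fin s → Matrix (Fin d₂) (Fin d₂) ℂ)
    (hA : ∀ k, (A k).PosSemidef) (hB : ∀ k, (B k).PosSemidef) :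
    ∃ (d₁' d₂' : ℕ) (L₁ : Fin s → Matrix (Fin d₁) (Fin d₁') ℂ)
      (L₂ : Fin s → Matrix (Fin d₂) (Fin d₂') ℂ),
      (∑ k, L₁ k ⊗ₖ L₂ k) * (∑ k, L₁ k ⊗ₖ L₂ k)ᴴ = ∑ k, A k ⊗ₖ B k := by
  set L₁ : Fin s → Matrix (Fin d₁) (Fin (s * d₁)) ℂ := fun k => Matrix.of fun i c =>
      if (finProdFinEquiv.symm c).1 = k then (hA k).sqrt i (finProdFinEquiv.symm c).2 else 0
    with hL₁def
  refine ⟨s * d₁, d₂, L₁, fun k => (hB k).sqrt, ?_⟩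
  have hL : ∀ k l, L₁ k * (L₁ l)ᴴ = if k = l then A k else 0 := by
    intro k l
    ext i j
    rw [mul_apply]
    rw [← Equiv.sum_comp finProdFinEquiv (fun c => _)]
    simp only [hL₁def, conjTranspose_apply, Matrix.of_apply, Equiv.symm_apply_apply]
    rw [Fintype.sum_prod_type]
    by_cases hkl : k = l
    · subst hkl
      rw [Finset.sum_eq_single k]
      · simp only [eq_self_iff_true, if_true]
        have h2 : A k i j = ((hA k).sqrt * (hA k).sqrt) i j := by rw [(hA k).sqrt_mul_self]
        rw [h2, mul_apply]
        refine Finset.sum_congr rfl fun m _ => ?_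
        have h3 : (hA k).sqrt m j = star ((hA k).sqrt j m) := by
          conv_lhs => rw [← (hA k).posSemidef_sqrt.isHermitian.eq]
          simp [conjTranspose_apply]
        rw [h3]
      · intro b _ hb
        simp [if_neg hb]
      · intro h; exact absurd (Finset.mem_univ k) h
    · simp only [if_neg hkl, Matrix.zero_apply]
      apply Finset.sum_eq_zero
      intro a _
      apply Finset.sum_eq_zero
      intro b _
      by_cases ha : a = k
      · subst ha; rw [if_neg hkl]; simp
      · rw [if_neg ha]; simp
  have hBk : ∀ k : Fin s, (hB k).sqrt * ((hB k).sqrt)ᴴ = B k := by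
    intro k
    rw [(hB k).posSemidef_sqrt.isHermitian.eq, (hB k).sqrt_mul_self]
  show (∑ k, L₁ k ⊗ₖ (hB k).sqrt) * (∑ k, L₁ k ⊗ₖ (hB k).sqrt)ᴴ = _
  rw [sum_mul_sum_conjT]
  calc ∑ k : Fin s, ∑ l : Fin s, (L₁ k ⊗ₖ (hB k).sqrt) * (L₁ l ⊗ₖ (hB l).sqrt)ᴴ
      = ∑ k : Fin s, ∑ l : Fin s, (if k = l then A k ⊗ₖ B k else 0) := by
        refine Finset.sum_congr rfl fun k _ => Finset.sum_congr rfl fun l _ => ?_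
        rw [kron_conjT, ← mul_kronecker_mul, hL]
        by_cases hkl : k = l
        · subst hkl; rw [if_pos rfl, if_pos rfl, hBk]
        · rw [if_neg hkl, if_neg hkl, zero_kronecker]
    _ = ∑ k, A k ⊗ₖ B k := by simp

/-- For a separable psd matrix, the operator Schmidt rank and the purification rank are
bounded by the separable rank; in particular any separable decomposition with `s` terms
yields a purification with `s` Kronecker terms. -/
theorem osr_le_sepRank_and_puriRank_le_sepRank {d₁ d₂ : ℕ}
    (ρ : Matrix (Fin d₁ × Fin d₂) (Fin d₁ × Fin d₂) ℂ)
    (hρ : ρ.PosSemidef) (hsep : Separable ρ) :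
    osr ρ ≤ sepRank ρ ∧ puriRank ρ ≤ sepRank ρ ∧
    ∀ (s : ℕ) (A : Fin s → Matrix (Fin d₁) (Fin d₁) ℂ)
      (B : Fin s → Matrix (Fin d₂) (Fin d₂) ℂ),
      (∀ k, (A k).PosSemidef) → (∀ k, (B k).PosSemidef) →
      ρ = ∑ k, A k ⊗ₖ B k →
      ∃ (d₁' d₂' : ℕ) (L₁ : Fin s → Matrix (Fin d₁) (Fin d₁') ℂ)
        (L₂ : Fin s → Matrix (Fin d₂) (Fin d₂') ℂ),
        (∑ k, L₁ k ⊗ₖ L₂ k) * (∑ k, L₁ k ⊗ₖ L₂ k)ᴴ = ρ := by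
  have hne : {r : ℕ | ∃ (A : Fin r → Matrix (Fin d₁) (Fin d₁) ℂ)
      (B : Fin r → Matrix (Fin d₂) (Fin d₂) ℂ),
      (∀ k, (A k).PosSemidef) ∧ (∀ k, (B k).PosSemidef) ∧ ρ = ∑ k, A k ⊗ₖ B k}.Nonempty := by
    obtain ⟨r, A, B, h1, h2, h3⟩ := hsep
    exact ⟨r, A, B, h1, h2, h3⟩
  have hmem := Nat.sInf_mem hne
  obtain ⟨A, B, hA, hB, hρeq⟩ := hmem
  refine ⟨?_, ?_, ?_⟩
  · exact Nat.sInf_le ⟨A, B, hρeq⟩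
  · obtain ⟨d₁', d₂', L₁, L₂, hL⟩ := puri_exists A B hA hB
    exact Nat.sInf_le ⟨d₁', d₂', L₁, L₂, hL.trans hρeq.symm⟩
  · intro s A B hA hB hρeq
    obtain ⟨d₁', d₂', L₁, L₂, hL⟩ := puri_exists A B hA hB
    exact ⟨d₁', d₂', L₁, L₂, hL.trans hρeq.symm⟩
end

section
/- Let ρ : Matrix (Fin d₁ × Fin d₂) (Fin d₁ × Fin d₂) ℂ be positive semidefinite. Then osr(ρ) ≤ puri-rank(ρ)². Equivalently, if there exist d₁', d₂' ∈ ℕ and matrices L¹ k : Matrix (Fin d₁) (Fin d₁') ℂ, L² k : Matrix (Fin d₂) (Fin d₂') ℂ (k < r) such that L = Σ_{k<r} L¹ k ⊗ₖ L² k satisfies L * Lᴴ = ρ, then there exist A m : Matrix (Fin d₁) (Fin d₁) ℂ and B m : Matrix (Fin d₂) (Fin d₂) ℂ (m < r²) with ρ = Σ_{m<r²} A m ⊗ₖ B m. -/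
open Matrix Kronecker
open scoped BigOperators ComplexOrder

lemma kron_conjTranspose {l m n p : Type*} (A : Matrix l m ℂ) (B : Matrix n p ℂ) :
    (A ⊗ₖ B)ᴴ = Aᴴ ⊗ₖ Bᴴ := by
  ext ⟨i, j⟩ ⟨k, l⟩
  simp [conjTranspose_apply, kroneckerMap_apply, mul_comm]

lemma decomp {d₁ d₂ e₁ e₂ : ℕ} (M : Matrix (Fin d₁ × Fin d₂) (Fin e₁ × Fin e₂) ℂ) :
    ∃ (L₁ : Fin (d₁ * e₁) → Matrix (Fin d₁) (Fin e₁) ℂ)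
      (L₂ : Fin (d₁ * e₁) → Matrix (Fin d₂) (Fin e₂) ℂ),
      M = ∑ k, L₁ k ⊗ₖ L₂ k := by
  refine ⟨fun k => single (finProdFinEquiv.symm k).1 (finProdFinEquiv.symm k).2 1,
    fun k => of fun i j => M ((finProdFinEquiv.symm k).1, i) ((finProdFinEquiv.symm k).2, j), ?_⟩
  rw [← Equiv.sum_comp finProdFinEquiv
    (fun k => (single (finProdFinEquiv.symm k).1 (finProdFinEquiv.symm k).2 1 : Matrix (Fin d₁) (Fin e₁) ℂ) ⊗ₖ _)]
  simp only [Equiv.symm_apply_apply]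
  ext ⟨c, i⟩ ⟨d, j⟩
  rw [Matrix.sum_apply]
  rw [Fintype.sum_prod_type]
  simp [kroneckerMap_apply, single, ite_and, Finset.sum_ite_eq, Finset.sum_ite_eq']

lemma key {d₁ d₂ : ℕ} (ρ : Matrix (Fin d₁ × Fin d₂) (Fin d₁ × Fin d₂) ℂ)
    (r d₁' d₂' : ℕ) (L₁ : Fin r → Matrix (Fin d₁) (Fin d₁') ℂ)
    (L₂ : Fin r → Matrix (Fin d₂) (Fin d₂') ℂ)
    (h : (∑ k, L₁ k ⊗ₖ L₂ k) * (∑ k, L₁ k ⊗ₖ L₂ k)ᴴ = ρ) :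
    ∃ (A : Fin (r ^ 2) → Matrix (Fin d₁) (Fin d₁) ℂ)
      (B : Fin (r ^ 2) → Matrix (Fin d₂) (Fin d₂) ℂ),
      ρ = ∑ m, A m ⊗ₖ B m := by
  set e : Fin (r ^ 2) ≃ Fin r × Fin r := (finCongr (pow_two r)).trans finProdFinEquiv.symm
  refine ⟨fun m => L₁ (e m).1 * (L₁ (e m).2)ᴴ, fun m => L₂ (e m).1 * (L₂ (e m).2)ᴴ, ?_⟩
  rw [← h]
  rw [Equiv.sum_comp e (fun p : Fin r × Fin r =>
      (L₁ p.1 * (L₁ p.2)ᴴ) ⊗ₖ (L₂ p.1 * (L₂ p.2)ᴴ))]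
  rw [Fintype.sum_prod_type, conjTranspose_sum, Matrix.sum_mul]
  simp only [Matrix.mul_sum, kron_conjTranspose, mul_kronecker_mul]


/-- `osr ρ ≤ puri-rank ρ ^ 2`, for positive semidefinite `ρ`; explicitly, any purification with
`r` Kronecker terms yields an operator Schmidt decomposition with `r²` terms. -/
theorem osr_le_puriRank_sq {d₁ d₂ : ℕ}
    (ρ : Matrix (Fin d₁ × Fin d₂) (Fin d₁ × Fin d₂) ℂ) (hρ : ρ.PosSemidef) :
    osr ρ ≤ puriRank ρ ^ 2 ∧
    ∀ (r d₁' d₂' : ℕ) (L₁ : Fin r → Matrix (Fin d₁) (Fin d₁') ℂ)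
      (L₂ : Fin r → Matrix (Fin d₂) (Fin d₂') ℂ),
      (∑ k, L₁ k ⊗ₖ L₂ k) * (∑ k, L₁ k ⊗ₖ L₂ k)ᴴ = ρ →
      ∃ (A : Fin (r ^ 2) → Matrix (Fin d₁) (Fin d₁) ℂ)
        (B : Fin (r ^ 2) → Matrix (Fin d₂) (Fin d₂) ℂ),
        ρ = ∑ m, A m ⊗ₖ B m := by
  constructor
  · -- nonemptiness of puri set
    have hne : (puriRank ρ) ∈ {r : ℕ | ∃ (d₁' d₂' : ℕ)
        (L₁ : Fin r → Matrix (Fin d₁) (Fin d₁') ℂ)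
        (L₂ : Fin r → Matrix (Fin d₂) (Fin d₂') ℂ),
        (∑ k, L₁ k ⊗ₖ L₂ k) * (∑ k, L₁ k ⊗ₖ L₂ k)ᴴ = ρ} := by
      apply Nat.sInf_mem
      obtain ⟨S, hS⟩ : ∃ S : Matrix (Fin d₁ × Fin d₂) (Fin d₁ × Fin d₂) ℂ, ρ = star S * S := by
        open scoped MatrixOrder Matrix.Norms.L2Operator in
        exact CStarAlgebra.nonneg_iff_eq_star_mul_self.mp hρ.nonneg
      obtain ⟨L₁, L₂, hM⟩ := decomp Sᴴ
      exact ⟨d₁ * d₁, d₁, d₂, L₁, L₂, by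
        rw [← hM, conjTranspose_conjTranspose, hS, star_eq_conjTranspose]⟩
    obtain ⟨d₁', d₂', L₁, L₂, h⟩ := hne
    obtain ⟨A, B, hAB⟩ := key ρ _ d₁' d₂' L₁ L₂ h
    exact Nat.sInf_le ⟨A, B, hAB⟩
  · exact fun r d₁' d₂' L₁ L₂ h => key ρ r d₁' d₂' L₁ L₂ h
end
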